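/- Let R(p,q), defined for 0 ≤ q ≤ p, satisfy R(p,0) = 1, R(p,q) = R(p-1,q) + R(p,q-1) + R(p-1,q-1) for 1 ≤ q < p, and R(n,n) = R(n,n-1) + R(n-1,n-1) for n ≥ 1. Then for all 0 ≤ q ≤ p, viewing all terms as rational numbers, R(p,q) = Σ_{r=0}^{q} ((p-q+1)/(p-r+1)) · (p+q-r)! / ((p-r)!·(q-r)!·r!). -/

import Mathlib

def Thvd (p q r : ℕ) : ℚ :=
  (((p : ℚ) - q + 1) / ((p : ℚ) - r + 1))
    * (Nat.factorial (p + q - r) : ℚ)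
    / ((Nat.factorial (p - r) : ℚ) * (Nat.factorial (q - r) : ℚ)
        * (Nat.factorial r : ℚ))

lemma fact_cast_ne (n : ℕ) : (Nat.factorial n : ℚ) ≠ 0 := by
  exact_mod_cast Nat.factorial_ne_zero n

lemma Thvd_base (p : ℕ) : Thvd p 0 0 = 1 := by
  have h1 : ((p : ℚ) + 1) ≠ 0 := by positivity
  have h2 := fact_cast_ne p
  simp [Thvd]
  field_simp

lemma L1 (p q : ℕ) (hq : 1 ≤ q) (hqp : q < p) :
    Thvd p q 0 = Thvd (p-1) q 0 + Thvd p (q-1) 0 := by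
  obtain ⟨b, rfl⟩ : ∃ b, q = b + 1 := ⟨q - 1, by omega⟩
  obtain ⟨c, rfl⟩ : ∃ c, p = b + c + 2 := ⟨p - b - 2, by omega⟩
  simp only [Thvd]
  rw [show b+c+2 + (b+1) - 0 = (2*b+c+2)+1 by omega,
      show b+c+2 - 1 = b+c+1 by omega,
      show b+c+1 + (b+1) - 0 = 2*b+c+2 by omega,
      show b+1-1 = b by omega,
      show b+c+2 + b - 0 = 2*b+c+2 by omega,
      show b+c+2-0 = (b+c+1)+1 by omega,
      show b+c+1-0 = b+c+1 by omega,
      show (b+1)-0 = b+1 by omega,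
      show b-0 = b by omega,
      Nat.factorial_succ, Nat.factorial_succ (b+c+1),
      show (b:ℕ)+1 = b+1 from rfl]
  rw [Nat.factorial_succ b]
  have hA := fact_cast_ne (2*b+c+2)
  have hX := fact_cast_ne (b+c+1)
  have hY := fact_cast_ne b
  have h1 : ((b:ℚ)+c+2) - 0 + 1 ≠ 0 := by ring_nf; positivity
  push_cast
  have h2 : ((b:ℚ)+c+2) + 1 ≠ 0 := by positivity
  have h3 : ((b:ℚ)+c+1) + 1 ≠ 0 := by positivity
  have h4 : ((b:ℚ)+c+1) ≠ 0 := by positivity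
  have h5 : ((b:ℚ)+1) ≠ 0 := by positivity
  have h6 : ((b:ℚ)+c+1) - 0 + 1 ≠ 0 := by ring_nf; positivity
  field_simp
  ring

lemma L2 (p q r : ℕ) (hr : 1 ≤ r) (hrq : r < q) (hqp : q < p) :
    Thvd p q r = Thvd (p-1) q r + Thvd p (q-1) r + Thvd (p-1) (q-1) (r-1) := by
  obtain ⟨s, rfl⟩ : ∃ s, r = s + 1 := ⟨r - 1, by omega⟩
  obtain ⟨b, rfl⟩ : ∃ b, q = s + b + 2 := ⟨q - s - 2, by omega⟩
  obtain ⟨c, rfl⟩ : ∃ c, p = s + b + c + 3 := ⟨p - s - b - 3, by omega⟩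
  simp only [Thvd]
  rw [show s+b+c+3 + (s+b+2) - (s+1) = (s+2*b+c+3)+1 by omega,
      show s+b+c+3 - 1 = s+b+c+2 by omega,
      show s+b+c+2 + (s+b+2) - (s+1) = s+2*b+c+3 by omega,
      show s+b+2 - 1 = s+b+1 by omega,
      show s+b+c+3 + (s+b+1) - (s+1) = s+2*b+c+3 by omega,
      show s+1-1 = s by omega,
      show s+b+c+2 + (s+b+1) - s = s+2*b+c+3 by omega,
      show s+b+c+3 - (s+1) = (b+c+1)+1 by omega,
      show s+b+c+2 - (s+1) = b+c+1 by omega,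
      show s+b+c+2 - s = (b+c+1)+1 by omega,
      show s+b+2 - (s+1) = b+1 by omega,
      show s+b+1 - (s+1) = b by omega,
      show s+b+1 - s = b+1 by omega,
      Nat.factorial_succ, Nat.factorial_succ (b+c+1), Nat.factorial_succ b,
      Nat.factorial_succ s]
  have hA := fact_cast_ne (s+2*b+c+3)
  have hX := fact_cast_ne (b+c+1)
  have hY := fact_cast_ne b
  have hZ := fact_cast_ne s
  push_cast
  have h1 : ((s:ℚ)+b+c+3) - ((s:ℚ)+1) + 1 ≠ 0 := by ring_nf; positivity
  have h2 : ((s:ℚ)+b+c+2) - ((s:ℚ)+1) + 1 ≠ 0 := by ring_nf; positivity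
  have h3 : ((s:ℚ)+b+c+2) - (s:ℚ) + 1 ≠ 0 := by ring_nf; positivity
  have h4 : ((b:ℚ)+c+1) + 1 ≠ 0 := by positivity
  have h5 : ((b:ℚ)+1) ≠ 0 := by positivity
  have h6 : ((s:ℚ)+1) ≠ 0 := by positivity
  field_simp
  ring

lemma L3 (p q : ℕ) (hq : 1 ≤ q) (hqp : q < p) :
    Thvd p q q = Thvd (p-1) q q + Thvd (p-1) (q-1) (q-1) := by
  obtain ⟨b, rfl⟩ : ∃ b, q = b + 1 := ⟨q - 1, by omega⟩
  obtain ⟨c, rfl⟩ : ∃ c, p = b + c + 2 := ⟨p - b - 2, by omega⟩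
  simp only [Thvd]
  rw [show b+c+2 + (b+1) - (b+1) = (b+c+1)+1 by omega,
      show b+c+2 - 1 = b+c+1 by omega,
      show b+c+1 + (b+1) - (b+1) = b+c+1 by omega,
      show b+1-1 = b by omega,
      show b+c+1 + b - b = b+c+1 by omega,
      show b+c+2 - (b+1) = c+1 by omega,
      show b+c+1 - (b+1) = c by omega,
      show b+c+1 - b = c+1 by omega,
      Nat.factorial_succ (b+c+1), show (c:ℕ)+1 = c+1 from rfl]
  rw [Nat.factorial_succ c, Nat.factorial_succ b]
  have hA := fact_cast_ne (b+c+1)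
  have hX := fact_cast_ne c
  have hY := fact_cast_ne b
  push_cast
  have h1 : ((b:ℚ)+c+2) - ((b:ℚ)+1) + 1 ≠ 0 := by ring_nf; positivity
  have h2 : ((b:ℚ)+c+1) - ((b:ℚ)+1) + 1 ≠ 0 := by ring_nf; positivity
  have h3 : ((b:ℚ)+c+1) - (b:ℚ) + 1 ≠ 0 := by ring_nf; positivity
  have h4 : ((c:ℚ)+1) ≠ 0 := by positivity
  have h5 : ((b:ℚ)+1) ≠ 0 := by positivity
  field_simp
  ring

lemma L4 (p : ℕ) (hp : 1 ≤ p) : Thvd p p 0 = Thvd p (p-1) 0 := by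
  obtain ⟨m, rfl⟩ : ∃ m, p = m + 1 := ⟨p - 1, by omega⟩
  simp only [Thvd]
  rw [show m+1 + (m+1) - 0 = (2*m+1)+1 by omega,
      show m+1-1 = m by omega,
      show m+1 + m - 0 = 2*m+1 by omega,
      show m+1-0 = m+1 by omega,
      show m-0 = m by omega,
      Nat.factorial_succ, Nat.factorial_succ m]
  have hA := fact_cast_ne (2*m+1)
  have hY := fact_cast_ne m
  push_cast
  have h1 : ((m:ℚ)+1) - 0 + 1 ≠ 0 := by ring_nf; positivity
  have h5 : ((m:ℚ)+1) ≠ 0 := by positivity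
  field_simp
  ring

lemma L5 (p r : ℕ) (hr : 1 ≤ r) (hrp : r < p) :
    Thvd p p r = Thvd p (p-1) r + Thvd (p-1) (p-1) (r-1) := by
  obtain ⟨s, rfl⟩ : ∃ s, r = s + 1 := ⟨r - 1, by omega⟩
  obtain ⟨b, rfl⟩ : ∃ b, p = s + b + 2 := ⟨p - s - 2, by omega⟩
  simp only [Thvd]
  rw [show s+b+2 + (s+b+2) - (s+1) = (s+2*b+2)+1 by omega,
      show s+b+2 - 1 = s+b+1 by omega,
      show s+b+2 + (s+b+1) - (s+1) = s+2*b+2 by omega,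
      show s+1-1 = s by omega,
      show s+b+1 + (s+b+1) - s = s+2*b+2 by omega,
      show s+b+2 - (s+1) = (b)+1 by omega,
      show s+b+1 - (s+1) = b by omega,
      show s+b+1 - s = (b)+1 by omega,
      Nat.factorial_succ (s+2*b+2), Nat.factorial_succ b, Nat.factorial_succ s]
  have hA := fact_cast_ne (s+2*b+2)
  have hY := fact_cast_ne b
  have hZ := fact_cast_ne s
  push_cast
  have h1 : ((s:ℚ)+b+2) - ((s:ℚ)+1) + 1 ≠ 0 := by ring_nf; positivity
  have h2 : ((s:ℚ)+b+1) - ((s:ℚ)+1) + 1 ≠ 0 := by ring_nf; positivity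
  have h3 : ((s:ℚ)+b+1) - (s:ℚ) + 1 ≠ 0 := by ring_nf; positivity
  have h5 : ((b:ℚ)+1) ≠ 0 := by positivity
  have h6 : ((s:ℚ)+1) ≠ 0 := by positivity
  field_simp
  ring

lemma L6 (p : ℕ) : Thvd p p p = 1 := by
  simp only [Thvd]
  rw [show p + p - p = p by omega, show p - p = 0 by omega]
  have h2 := fact_cast_ne p
  simp
  exact Nat.factorial_ne_zero p

theorem subdiagonal_hvd_formula
    (R : ℕ → ℕ → ℕ)
    (hR0 : ∀ p, R p 0 = 1)
    (hRrec : ∀ p q, 1 ≤ q → q < p →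
      R p q = R (p - 1) q + R p (q - 1) + R (p - 1) (q - 1))
    (hRdiag : ∀ n, 1 ≤ n → R n n = R n (n - 1) + R (n - 1) (n - 1)) :
    ∀ p q, q ≤ p →
      (R p q : ℚ) = ∑ r ∈ Finset.range (q + 1),
        (((p : ℚ) - q + 1) / ((p : ℚ) - r + 1))
          * (Nat.factorial (p + q - r) : ℚ)
          / ((Nat.factorial (p - r) : ℚ) * (Nat.factorial (q - r) : ℚ)
              * (Nat.factorial r : ℚ)) := by
  have key : ∀ n p q, p + q ≤ n → q ≤ p →
      (R p q : ℚ) = ∑ r ∈ Finset.range (q + 1), Thvd p q r := by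
    intro n
    induction n with
    | zero =>
      intro p q h hq
      have hp : p = 0 := by omega
      have hq0 : q = 0 := by omega
      subst hp; subst hq0
      simp [hR0, Thvd_base]
    | succ n ih =>
      intro p q hpq hq
      rcases Nat.eq_zero_or_pos q with rfl | hq1
      · simp [hR0, Thvd_base]
      rcases eq_or_lt_of_le hq with heq | hlt
      · -- diagonal: q = p
        subst heq
        obtain ⟨m, rfl⟩ : ∃ m, q = m + 1 := ⟨q - 1, by omega⟩
        rw [hRdiag (m+1) (by omega)]
        push_cast
        rw [ih (m+1) m (by omega) (by omega), ih m m (by omega) (by omega)]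
        rw [Finset.sum_range_succ' (fun r => Thvd (m+1) (m+1) r) (m+1),
            Finset.sum_range_succ (fun i => Thvd (m+1) (m+1) (i+1)) m,
            Finset.sum_range_succ' (fun r => Thvd (m+1) m r) m,
            Finset.sum_range_succ (fun i => Thvd m m i) m]
        rw [L4 (m+1) (by omega)]
        simp only [show (m+1)-1 = m from rfl]
        have hint : ∀ i ∈ Finset.range m, Thvd (m+1) (m+1) (i+1) =
            Thvd (m+1) m (i+1) + Thvd m m i := by
          intro i hi
          have := L5 (m+1) (i+1) (by omega) (by simp at hi; omega)
          simpa using this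
        rw [Finset.sum_congr rfl hint, Finset.sum_add_distrib]
        have hlast : Thvd (m+1) (m+1) (m+1) = Thvd m m m := by
          rw [L6, L6]
        rw [hlast]
        ring
      · -- q < p
        obtain ⟨m, rfl⟩ : ∃ m, q = m + 1 := ⟨q - 1, by omega⟩
        rw [hRrec p (m+1) (by omega) hlt]
        push_cast
        rw [ih (p-1) (m+1) (by omega) (by omega),
            ih p m (by omega) (by omega), ih (p-1) m (by omega) (by omega)]
        rw [Finset.sum_range_succ' (fun r => Thvd p (m+1) r) (m+1),
            Finset.sum_range_succ (fun i => Thvd p (m+1) (i+1)) m,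
            Finset.sum_range_succ' (fun r => Thvd (p-1) (m+1) r) (m+1),
            Finset.sum_range_succ (fun i => Thvd (p-1) (m+1) (i+1)) m,
            Finset.sum_range_succ' (fun r => Thvd p m r) m,
            Finset.sum_range_succ (fun i => Thvd (p-1) m i) m]
        have h0 : Thvd p (m+1) 0 = Thvd (p-1) (m+1) 0 + Thvd p m 0 := by
          have := L1 p (m+1) (by omega) hlt
          simpa using this
        have hlast : Thvd p (m+1) (m+1) =
            Thvd (p-1) (m+1) (m+1) + Thvd (p-1) m m := by
          have := L3 p (m+1) (by omega) hlt
          simpa using this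
        have hint : ∀ i ∈ Finset.range m, Thvd p (m+1) (i+1) =
            Thvd (p-1) (m+1) (i+1) + Thvd p m (i+1) + Thvd (p-1) m i := by
          intro i hi
          have := L2 p (m+1) (i+1) (by omega) (by simp at hi; omega) hlt
          simpa using this
        rw [h0, hlast, Finset.sum_congr rfl hint, Finset.sum_add_distrib,
            Finset.sum_add_distrib]
        ring
  intro p q hq
  exact key (p + q) p q le_rfl hq
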